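/- Let n ≥ 4 be divisible by 6 and let g, h be distinct nontrivial elements of ℤ₂×ℤ₂. Then the triangle-game winning operator O_{g,h} is Hermitian, positive semidefinite, satisfies O_{g,h} ≤ 1 (all eigenvalues lie in [0,1]), and fixes the cyclic cluster state: O_{g,h} |C_n⟩ = |C_n⟩. -/

import Mathlib

open Matrix Complex
open scoped ComplexOrder

noncomputable section

/-- The state space of `n` qubits, as functions on classical bit strings. -/
abbrev QState (n : ℕ) := (Fin n → Fin 2) → ℂ

/-- Operators on `n` qubits: `2^n × 2^n` complex matrices. -/
abbrev Op (n : ℕ) := Matrix (Fin n → Fin 2) (Fin n → Fin 2) ℂ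

/-- The single-qubit Pauli `X` matrix. -/
def Xmat : Matrix (Fin 2) (Fin 2) ℂ := !![0, 1; 1, 0]

/-- The single-qubit Pauli `Z` matrix. -/
def Zmat : Matrix (Fin 2) (Fin 2) ℂ := !![1, 0; 0, -1]

/-- Map a 1-based cyclic site label `j ∈ {1,…,n}` (taken mod `n`) to an index in `Fin n`. -/
def site (n : ℕ) [NeZero n] (j : ℕ) : Fin n :=
  ⟨(j + (n - 1)) % n, Nat.mod_lt _ (Nat.pos_of_ne_zero (NeZero.ne n))⟩

/-- The operator acting as the single-qubit matrix `M` on qubit `i` and as identity elsewhere. -/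
def onSite (n : ℕ) (i : Fin n) (M : Matrix (Fin 2) (Fin 2) ℂ) : Op n :=
  Matrix.of fun s t => (if ∀ k, k ≠ i → s k = t k then 1 else 0) * M (s i) (t i)

/-- Pauli `X` on (1-based, cyclic) site `j`. -/
def PX (n : ℕ) [NeZero n] (j : ℕ) : Op n := onSite n (site n j) Xmat

/-- Pauli `Z` on (1-based, cyclic) site `j`. -/
def PZ (n : ℕ) [NeZero n] (j : ℕ) : Op n := onSite n (site n j) Zmat

/-- The cyclic cluster stabilizer `K_j = Z_{j-1} X_j Z_{j+1}` (for `1 ≤ j ≤ n`). -/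
def Kstab (n : ℕ) [NeZero n] (j : ℕ) : Op n := PZ n (j - 1) * PX n j * PZ n (j + 1)

/-- The symmetry group `ℤ₂ × ℤ₂`. -/
abbrev G2 := ZMod 2 × ZMod 2

/-- The nontrivial element `x = (0,1)` of `ℤ₂ × ℤ₂`. -/
def gx : G2 := (0, 1)

/-- The nontrivial element `y = (1,0)` of `ℤ₂ × ℤ₂`. -/
def gy : G2 := (1, 0)

/-- The nontrivial element `z = (1,1)` of `ℤ₂ × ℤ₂`. -/
def gz : G2 := (1, 1)

/-- The global symmetry representation `U((a,b)) = ∏_{j odd} X_j^a ∏_{j even} X_j^b`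
on `n` qubits (`n` even), written as a product over the `n/2` two-site blocks. -/
def Usym (n : ℕ) [NeZero n] (g : G2) : Op n :=
  ((List.range (n / 2)).map
    (fun p => PX n (2 * p + 1) ^ g.1.val * PX n (2 * p + 2) ^ g.2.val)).prod

/-- Left boundary operator `V^L_p((a,b))`: `Z^b` on qubit `2p-1` and `X^b Z^a` on qubit `2p`. -/
def VL (n : ℕ) [NeZero n] (p : ℕ) (g : G2) : Op n :=
  PZ n (2 * p - 1) ^ g.2.val * (PX n (2 * p) ^ g.2.val * PZ n (2 * p) ^ g.1.val)

/-- Right boundary operator `V^R_p((a,b))`: `Z^b X^a` on qubit `2p-1` and `Z^a` on qubit `2p`. -/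
def VR (n : ℕ) [NeZero n] (p : ℕ) (g : G2) : Op n :=
  (PZ n (2 * p - 1) ^ g.2.val * PX n (2 * p - 1) ^ g.1.val) * PZ n (2 * p) ^ g.1.val

/-- Truncated symmetry `U_{[p,q]}((a,b)) = ∏_{r=p+1}^{q-1} X_{2r-1}^a X_{2r}^b`. -/
def Ustr (n : ℕ) [NeZero n] (p q : ℕ) (g : G2) : Op n :=
  ((List.range (q - (p + 1))).map
    (fun r => PX n (2 * (p + 1 + r) - 1) ^ g.1.val * PX n (2 * (p + 1 + r)) ^ g.2.val)).prod

/-- The string order parameter `S_{[p,q]}(g) = V^L_p(g) · U_{[p,q]}(g) · V^R_q(g)`. -/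
def SOPm (n : ℕ) [NeZero n] (p q : ℕ) (g : G2) : Op n :=
  VL n p g * Ustr n p q g * VR n q g

/-- The twisted string order parameter
`T_{[p,q]}^{(g,h)} = V^R_q(g) · U(h) · V^L_p(g) · U_{[p,q]}(g)`. -/
def TSOP (n : ℕ) [NeZero n] (p q : ℕ) (g h : G2) : Op n :=
  VR n q g * Usym n h * VL n p g * Ustr n p q g

/-- The triangle-game winning operator
`O_{g,h} = (1/32)(12·1 + 12 U(g) + U(h) + U(gh) − 3T − 3U(g)T)` with `T = T_{[1,n/6+1]}^{(g,h)}`. -/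
def Owin (n : ℕ) [NeZero n] (g h : G2) : Op n :=
  (32 : ℂ)⁻¹ • (12 • (1 : Op n) + 12 • Usym n g + Usym n h + Usym n (g + h)
    - 3 • TSOP n 1 (n / 6 + 1) g h - 3 • (Usym n g * TSOP n 1 (n / 6 + 1) g h))

/-- The `n`-fold tensor product `|+⟩^{⊗n}`, with all amplitudes `(1/√2)^n`. -/
def plusState (n : ℕ) : QState n := fun _ => (((Real.sqrt 2)⁻¹ : ℝ) : ℂ) ^ n

/-- The controlled-`Z` gate between (1-based, cyclic) sites `j` and `k`. -/
def CZm (n : ℕ) [NeZero n] (j k : ℕ) : Op n :=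
  Matrix.of fun s t =>
    if s = t then (if s (site n j) = 1 ∧ s (site n k) = 1 then -1 else 1) else 0

/-- The `n`-qubit cyclic cluster state `|C_n⟩ = (∏_{j=1}^n CZ_{j,j+1}) |+⟩^{⊗n}`. -/
def cluster (n : ℕ) [NeZero n] : QState n :=
  (((List.range n).map (fun j => CZm n (j + 1) (j + 2))).prod).mulVec (plusState n)


set_option linter.unusedSectionVars false
namespace Pau

variable {n : ℕ} [NeZero n]

/-- sign character on ZMod 2 -/
def sgn (a : ZMod 2) : ℂ := if a = 0 then 1 else -1

@[simp] lemma sgn_zero : sgn 0 = 1 := rfl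
@[simp] lemma sgn_one : sgn 1 = -1 := rfl

lemma zcases (a : ZMod 2) : a = 0 ∨ a = 1 := by revert a; decide

lemma sgn_add (a b : ZMod 2) : sgn (a + b) = sgn a * sgn b := by
  rcases zcases a with rfl | rfl <;> rcases zcases b with rfl | rfl <;>
    simp [sgn, (by decide : (1 + 1 : ZMod 2) = 0)]

@[simp] lemma sgn_mul_self (a : ZMod 2) : sgn a * sgn a = 1 := by
  rcases zcases a with rfl | rfl <;> simp

@[simp] lemma sgn_conj (a : ZMod 2) : (starRingEnd ℂ) (sgn a) = sgn a := by
  rcases zcases a with rfl | rfl <;> simp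

@[simp] lemma sgn_star (a : ZMod 2) : star (sgn a) = sgn a := by
  rcases zcases a with rfl | rfl <;> simp

@[simp] lemma sgn_ne_zero (a : ZMod 2) : sgn a ≠ 0 := by
  rcases zcases a with rfl | rfl <;> simp [sgn]

/-- view a bit as an element of ZMod 2 (definitional) -/
def toZ : Fin 2 → ZMod 2 := fun x => x
def ofZ : ZMod 2 → Fin 2 := fun x => x

@[simp] lemma toZ_ofZ (x : ZMod 2) : toZ (ofZ x) = x := rfl
@[simp] lemma ofZ_toZ (x : Fin 2) : ofZ (toZ x) = x := rfl

/-- flip a state by a ZMod-2 vector -/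
def shift (s : Fin n → Fin 2) (F : Fin n → ZMod 2) : Fin n → Fin 2 :=
  fun i => ofZ (toZ (s i) + F i)

@[simp] lemma toZ_shift (s : Fin n → Fin 2) (F : Fin n → ZMod 2) (i : Fin n) :
    toZ (shift s F i) = toZ (s i) + F i := rfl

@[simp] lemma shift_zero (s : Fin n → Fin 2) : shift s 0 = s := by
  funext i
  show ofZ (toZ (s i) + 0) = s i
  rw [add_zero]; rfl

lemma shift_shift (s : Fin n → Fin 2) (F G : Fin n → ZMod 2) :
    shift (shift s F) G = shift s (F + G) := by
  funext i
  show ofZ ((toZ (s i) + F i) + G i) = ofZ (toZ (s i) + (F i + G i))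
  rw [add_assoc]

@[simp] lemma shift_shift_self (s : Fin n → Fin 2) (F : Fin n → ZMod 2) :
    shift (shift s F) F = s := by
  rw [shift_shift]
  have : F + F = 0 := by funext i; simp [CharTwo.add_self_eq_zero]
  rw [this, shift_zero]

lemma shift_eq_iff {s t : Fin n → Fin 2} {F : Fin n → ZMod 2} :
    t = shift s F ↔ s = shift t F := by
  constructor <;> (rintro rfl; rw [shift_shift_self])

/-- dot of a coefficient vector with a state -/
def dotZ (c : Fin n → ZMod 2) (s : Fin n → Fin 2) : ZMod 2 := ∑ i, c i * toZ (s i)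

/-- dot of two ZMod-2 vectors -/
def dotF (c F : Fin n → ZMod 2) : ZMod 2 := ∑ i, c i * F i

lemma dotZ_shift (c : Fin n → ZMod 2) (s : Fin n → Fin 2) (F : Fin n → ZMod 2) :
    dotZ c (shift s F) = dotZ c s + dotF c F := by
  simp [dotZ, dotF, mul_add, Finset.sum_add_distrib]

@[simp] lemma dotZ_zero (s : Fin n → Fin 2) : dotZ (0 : Fin n → ZMod 2) s = 0 := by
  simp [dotZ]

@[simp] lemma dotF_zero_left (F : Fin n → ZMod 2) : dotF (0 : Fin n → ZMod 2) F = 0 := by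
  simp [dotF]

lemma dotZ_add (c c' : Fin n → ZMod 2) (s : Fin n → Fin 2) :
    dotZ (c + c') s = dotZ c s + dotZ c' s := by
  simp [dotZ, add_mul, Finset.sum_add_distrib]

lemma dotF_add_left (c c' F : Fin n → ZMod 2) : dotF (c + c') F = dotF c F + dotF c' F := by
  simp [dotF, add_mul, Finset.sum_add_distrib]

lemma dotF_add_right (c F F' : Fin n → ZMod 2) : dotF c (F + F') = dotF c F + dotF c F' := by
  simp [dotF, mul_add, Finset.sum_add_distrib]

lemma dotF_single (i : Fin n) (v : ZMod 2) (F : Fin n → ZMod 2) :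
    dotF (Pi.single i v) F = v * F i := by
  unfold dotF
  rw [Finset.sum_eq_single i]
  · simp
  · intro b _ hb; simp [Pi.single_apply, hb]
  · simp

/-- The real Pauli-type operator with sign `ε`, Z-part `c`, X-part `F`. -/
def Pop (ε : ZMod 2) (c F : Fin n → ZMod 2) : Op n :=
  Matrix.of fun s t => if t = shift s F then sgn ε * sgn (dotZ c s) else 0

lemma Pop_apply (ε : ZMod 2) (c F : Fin n → ZMod 2) (s t : Fin n → Fin 2) :
    Pop ε c F s t = if t = shift s F then sgn ε * sgn (dotZ c s) else 0 := rfl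

lemma Pop_one : (Pop 0 0 0 : Op n) = 1 := by
  ext s t
  simp [Pop_apply, one_apply, eq_comm]

lemma Pop_mul (ε ε' : ZMod 2) (c c' F F' : Fin n → ZMod 2) :
    (Pop ε c F : Op n) * Pop ε' c' F' = Pop (ε + ε' + dotF c' F) (c + c') (F + F') := by
  ext s t
  rw [mul_apply]
  rw [Finset.sum_eq_single (shift s F)]
  · simp only [Pop_apply, of_apply, if_pos rfl, shift_shift]
    by_cases h : t = shift s (F + F')
    · rw [if_pos h, if_pos h, dotZ_shift, dotZ_add, sgn_add, sgn_add, sgn_add, sgn_add]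
      simp only [if_true]
      ring
    · rw [if_neg h, if_neg h, mul_zero]
  · intro b _ hb
    have : ¬ b = shift s F := fun h => hb h
    simp only [Pop_apply, of_apply, if_neg this, zero_mul]
  · simp

lemma Pop_conjTranspose (ε : ZMod 2) (c F : Fin n → ZMod 2) :
    (Pop ε c F : Op n)ᴴ = Pop (ε + dotF c F) c F := by
  ext s t
  simp only [conjTranspose_apply, Pop_apply]
  by_cases h : t = shift s F
  · rw [if_pos (shift_eq_iff.mp h), if_pos h]
    subst h
    rw [dotZ_shift, sgn_add, sgn_add]
    simp only [star_mul', sgn_star]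
    ring
  · rw [if_neg (fun hh => h (shift_eq_iff.mp hh)), if_neg h, star_zero]

lemma Pop_mulVec (ε : ZMod 2) (c F : Fin n → ZMod 2) (v : QState n) :
    (Pop ε c F : Op n).mulVec v = fun s => sgn ε * sgn (dotZ c s) * v (shift s F) := by
  funext s
  rw [mulVec, dotProduct, Finset.sum_eq_single (shift s F)]
  · rw [Pop_apply, if_pos rfl]
  · intro b _ hb; rw [Pop_apply, if_neg (Ne.symm hb ∘ Eq.symm), zero_mul]
  · simp

end Pau

namespace Pau

variable {n : ℕ} [NeZero n]

lemma site_val (k : ℕ) (hk : k < n) : site n (k+1) = ⟨k, hk⟩ := by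
  have h1 : (1:ℕ) ≤ n := Nat.one_le_iff_ne_zero.mpr (NeZero.ne n)
  unfold site
  apply Fin.ext
  show (k + 1 + (n-1)) % n = k
  have : k + 1 + (n-1) = k + n := by omega
  rw [this, Nat.add_mod_right, Nat.mod_eq_of_lt hk]

lemma dotZ_single (i : Fin n) (v : ZMod 2) (s : Fin n → Fin 2) :
    dotZ (Pi.single i v) s = v * toZ (s i) := by
  unfold dotZ
  rw [Finset.sum_eq_single i]
  · simp
  · intro b _ hb; simp [Pi.single_apply, hb]
  · simp

lemma dotF_zero_right (c : Fin n → ZMod 2) : dotF c 0 = 0 := by simp [dotF]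

@[simp] lemma shift_apply (s : Fin n → Fin 2) (F : Fin n → ZMod 2) (i : Fin n) :
    shift s F i = ofZ (toZ (s i) + F i) := rfl

lemma flip_iff : ∀ x y : Fin 2, (y = ofZ (toZ x + 1)) ↔ y ≠ x := by decide

lemma shift_single_iff {s t : Fin n → Fin 2} {i : Fin n} :
    t = shift s (Pi.single i (1:ZMod 2)) ↔ ((∀ k, k ≠ i → s k = t k) ∧ t i ≠ s i) := by
  constructor
  · rintro rfl
    refine ⟨fun k hk => ?_, ?_⟩
    · rw [shift_apply, Pi.single_apply, if_neg hk, add_zero, ofZ_toZ]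
    · rw [shift_apply, Pi.single_eq_same]
      exact (flip_iff (s i) _).mp rfl
  · rintro ⟨h1, h2⟩
    funext k
    by_cases hk : k = i
    · subst hk
      rw [shift_apply, Pi.single_eq_same]
      exact (flip_iff (s k) (t k)).mpr h2
    · rw [shift_apply, Pi.single_apply, if_neg hk, add_zero, ofZ_toZ]
      exact (h1 k hk).symm

lemma Xmat_apply : ∀ x y : Fin 2, Xmat x y = if y ≠ x then 1 else 0 := by
  intro x y
  fin_cases x <;> fin_cases y <;> simp [Xmat]

lemma Zmat_apply : ∀ x y : Fin 2, Zmat x y = if y = x then sgn (toZ x) else 0 := by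
  intro x y
  fin_cases x <;> fin_cases y <;> simp [Zmat, toZ] <;> rfl

lemma onSite_X (i : Fin n) : onSite n i Xmat = Pop 0 (0 : Fin n → ZMod 2) (Pi.single i 1) := by
  ext s t
  show (if ∀ k, k ≠ i → s k = t k then 1 else 0) * Xmat (s i) (t i) = _
  rw [Pop_apply, Xmat_apply]
  by_cases h : t = shift s (Pi.single i (1:ZMod 2))
  · obtain ⟨h1, h2⟩ := shift_single_iff.mp h
    rw [if_pos h, if_pos h1, if_pos h2]
    simp
  · rw [if_neg h]
    rcases Classical.em (∀ k, k ≠ i → s k = t k) with h1 | h1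
    · have h2 : ¬ (t i ≠ s i) := fun h2 => h (shift_single_iff.mpr ⟨h1, h2⟩)
      rw [if_pos h1, if_neg h2, one_mul]
    · rw [if_neg h1, zero_mul]

lemma onSite_Z (i : Fin n) : onSite n i Zmat = Pop 0 (Pi.single i (1:ZMod 2)) 0 := by
  ext s t
  show (if ∀ k, k ≠ i → s k = t k then 1 else 0) * Zmat (s i) (t i) = _
  rw [Pop_apply, Zmat_apply, shift_zero, dotZ_single, one_mul]
  by_cases h : t = s
  · subst h
    rw [if_pos rfl, if_pos rfl, if_pos (fun _ _ => rfl), one_mul, sgn_zero, one_mul]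
  · rw [if_neg h]
    rcases Classical.em (∀ k, k ≠ i → s k = t k) with h1 | h1
    · have h2 : ¬ (t i = s i) := by
        intro h2
        exact h (funext fun k => by by_cases hk : k = i
                                    · subst hk; exact h2
                                    · exact (h1 k hk).symm)
      rw [if_pos h1, if_neg h2, one_mul]
    · rw [if_neg h1, zero_mul]

lemma PX_pow (j : ℕ) (v : ZMod 2) :
    (PX n j) ^ v.val = Pop 0 (0 : Fin n → ZMod 2) (Pi.single (site n j) v) := by
  rcases zcases v with rfl | rfl
  · show _ ^ 0 = _
    rw [pow_zero, Pi.single_zero, Pop_one]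
  · show _ ^ 1 = _
    rw [pow_one, PX, onSite_X]

lemma PZ_pow (j : ℕ) (v : ZMod 2) :
    (PZ n j) ^ v.val = Pop 0 (Pi.single (site n j) v) (0 : Fin n → ZMod 2) := by
  rcases zcases v with rfl | rfl
  · show _ ^ 0 = _
    rw [pow_zero, Pi.single_zero, Pop_one]
  · show _ ^ 1 = _
    rw [pow_one, PZ, onSite_Z]

lemma prod_PopX (m : ℕ) (f : ℕ → Fin n → ZMod 2) :
    ((List.range m).map (fun p => (Pop 0 0 (f p) : Op n))).prod
      = Pop 0 0 (∑ p ∈ Finset.range m, f p) := by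
  induction m with
  | zero => simp [Pop_one]
  | succ m ih =>
      rw [List.range_succ, List.map_append, List.prod_append, ih]
      simp only [List.map_cons, List.map_nil, List.prod_cons, List.prod_nil, mul_one]
      rw [Pop_mul, Finset.sum_range_succ]
      simp

/-- the X-pattern of the global symmetry -/
def Fpat (g : G2) : Fin n → ZMod 2 := fun i => if 2 ∣ i.val then g.1 else g.2

lemma Usym_eq (hn2 : 2 ∣ n) (g : G2) : Usym n g = Pop 0 0 (Fpat g) := by
  unfold Usym
  have hfac : ∀ p, PX n (2*p+1) ^ g.1.val * PX n (2*p+2) ^ g.2.val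
      = (Pop 0 0 (Pi.single (site n (2*p+1)) g.1 + Pi.single (site n (2*p+2)) g.2) : Op n) := by
    intro p
    rw [PX_pow, PX_pow, Pop_mul]
    simp [dotF_zero_right]
  simp only [hfac]
  rw [prod_PopX]
  suffices hS : (∑ p ∈ Finset.range (n/2),
      (Pi.single (site n (2*p+1)) g.1 + Pi.single (site n (2*p+2)) g.2)) = Fpat (n := n) g by
    rw [hS]
  funext i
  have hi2 : i.val / 2 < n / 2 := by omega
  rw [Finset.sum_apply]
  rw [Finset.sum_eq_single (i.val / 2)]
  · have h1 : 2 * (i.val/2) < n := by omega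
    have h2 : 2 * (i.val/2) + 1 < n := by omega
    have e1 : site n (2*(i.val/2)+1) = ⟨2*(i.val/2), h1⟩ := site_val _ h1
    have e2 : site n (2*(i.val/2)+2) = ⟨2*(i.val/2)+1, h2⟩ := site_val (2*(i.val/2)+1) h2
    rw [Pi.add_apply, e1, e2, Pi.single_apply, Pi.single_apply, Fpat]
    by_cases hpar : 2 ∣ i.val
    · have : i = ⟨2*(i.val/2), h1⟩ := by apply Fin.ext; simp only [Fin.val_mk]; omega
      rw [if_pos this, if_pos hpar, if_neg, add_zero]
      intro hc
      have := congrArg Fin.val hc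
      simp only [Fin.val_mk] at this; omega
    · have : i = ⟨2*(i.val/2)+1, h2⟩ := by apply Fin.ext; simp only [Fin.val_mk]; omega
      rw [if_pos this, if_neg hpar, if_neg, zero_add]
      intro hc
      have := congrArg Fin.val hc
      simp only [Fin.val_mk] at this; omega
  · intro p hp hne
    have hpn : p < n / 2 := Finset.mem_range.mp hp
    have h1 : 2 * p < n := by omega
    have h2 : 2 * p + 1 < n := by omega
    rw [Pi.add_apply, site_val (2*p) h1, site_val (2*p+1) h2, Pi.single_apply, Pi.single_apply]
    rw [if_neg, if_neg, add_zero]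
    · intro hc; have := congrArg Fin.val hc; simp only [Fin.val_mk] at this; omega
    · intro hc; have := congrArg Fin.val hc; simp only [Fin.val_mk] at this; omega
  · intro hc
    exact absurd (Finset.mem_range.mpr hi2) hc

end Pau

namespace Pau

variable {n : ℕ} [NeZero n]

/-- truncated string pattern (with boundary contributions), support `1 ≤ i ≤ 2q-2` -/
def Gpat (g : G2) (q : ℕ) : Fin n → ZMod 2 :=
  fun i => if 1 ≤ i.val ∧ i.val ≤ 2*q-2 then Fpat g i else 0

/-- Z-part of the twisted string operator -/
def cTf (g : G2) (q : ℕ) : Fin n → ZMod 2 := fun i =>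
  if i.val = 0 then g.2 else if i.val = 1 then g.1 else
  if i.val = 2*q-2 then g.2 else if i.val = 2*q-1 then g.1 else 0

/-- X-part of the twisted string operator -/
def FTf (g h : G2) (q : ℕ) : Fin n → ZMod 2 := fun i => Fpat h i + Gpat g q i

lemma Ustr_eq (q : ℕ) (hqn : 2*q ≤ n) (g : G2) :
    Ustr n 1 q g = Pop 0 0
      (fun i => if 2 ≤ i.val ∧ i.val ≤ 2*q-3 then Fpat g i else 0) := by
  unfold Ustr
  have hfac : ∀ r, PX n (2*(1+1+r)-1) ^ g.1.val * PX n (2*(1+1+r)) ^ g.2.val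
      = (Pop 0 0 (Pi.single (site n ((2*r+2)+1)) g.1 + Pi.single (site n ((2*r+3)+1)) g.2) : Op n) := by
    intro r
    have e1 : 2*(1+1+r)-1 = (2*r+2)+1 := by omega
    have e2 : 2*(1+1+r) = (2*r+3)+1 := by omega
    rw [e1, e2, PX_pow, PX_pow, Pop_mul]
    simp [dotF_zero_right]
  simp only [hfac]
  rw [prod_PopX]
  suffices hS : (∑ r ∈ Finset.range (q - (1+1)),
      (Pi.single (site n ((2*r+2)+1)) g.1 + Pi.single (site n ((2*r+3)+1)) g.2))
      = (fun i => if 2 ≤ i.val ∧ i.val ≤ 2*q-3 then Fpat (n:=n) g i else 0) by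
    rw [hS]
  funext i
  rw [Finset.sum_apply]
  by_cases hin : 2 ≤ i.val ∧ i.val ≤ 2*q-3
  · rw [Finset.sum_eq_single ((i.val - 2)/2)]
    · have h1 : 2*((i.val-2)/2)+2 < n := by omega
      have h2 : 2*((i.val-2)/2)+3 < n := by omega
      rw [Pi.add_apply, site_val _ h1, site_val _ h2, Pi.single_apply, Pi.single_apply]
      rw [if_pos hin, Fpat]
      by_cases hpar : 2 ∣ i.val
      · have : i = ⟨2*((i.val-2)/2)+2, h1⟩ := by apply Fin.ext; simp only [Fin.val_mk]; omega
        rw [if_pos this, if_pos hpar, if_neg, add_zero]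
        intro hc; have := congrArg Fin.val hc; simp only [Fin.val_mk] at this; omega
      · have : i = ⟨2*((i.val-2)/2)+3, h2⟩ := by apply Fin.ext; simp only [Fin.val_mk]; omega
        rw [if_pos this, if_neg hpar, if_neg, zero_add]
        intro hc; have := congrArg Fin.val hc; simp only [Fin.val_mk] at this; omega
    · intro r hr hne
      have hrq : r < q - 2 := by simpa using Finset.mem_range.mp hr
      have h1 : 2*r+2 < n := by omega
      have h2 : 2*r+3 < n := by omega
      rw [Pi.add_apply, site_val _ h1, site_val _ h2, Pi.single_apply, Pi.single_apply,
        if_neg, if_neg, add_zero]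
      · intro hc; have := congrArg Fin.val hc; simp only [Fin.val_mk] at this; omega
      · intro hc; have := congrArg Fin.val hc; simp only [Fin.val_mk] at this; omega
    · intro hc
      exfalso; exact hc (Finset.mem_range.mpr (by omega))
  · rw [if_neg hin]
    apply Finset.sum_eq_zero
    intro r hr
    have hrq : r < q - 2 := by simpa using Finset.mem_range.mp hr
    have h1 : 2*r+2 < n := by omega
    have h2 : 2*r+3 < n := by omega
    rw [Pi.add_apply, site_val _ h1, site_val _ h2, Pi.single_apply, Pi.single_apply,
      if_neg, if_neg, add_zero]
    · intro hc; have := congrArg Fin.val hc; simp only [Fin.val_mk] at this; omega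
    · intro hc; have := congrArg Fin.val hc; simp only [Fin.val_mk] at this; omega

lemma Pop_congr {ε ε' : ZMod 2} {c c' F F' : Fin n → ZMod 2}
    (h1 : ε = ε') (h2 : c = c') (h3 : F = F') :
    (Pop ε c F : Op n) = Pop ε' c' F' := by subst h1; subst h2; subst h3; rfl

lemma VL_eq (hn2 : 2 ≤ n) (g : G2) :
    VL n 1 g = Pop (g.1*g.2)
      (Pi.single (site n 1) g.2 + Pi.single (site n 2) g.1)
      (Pi.single (site n 2) g.2) := by
  unfold VL
  rw [show 2*1-1 = 1 from rfl, show 2*1 = 2 from rfl]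
  rw [PZ_pow, PX_pow, PZ_pow, Pop_mul, Pop_mul]
  refine Pop_congr ?_ ?_ ?_
  · rw [dotF_zero_right, dotF_single, Pi.single_eq_same]
    ring
  · simp
  · simp

lemma VR_eq (q : ℕ) (hq1 : 1 ≤ q) (hqn : 2*q ≤ n) (g : G2) :
    VR n q g = Pop 0
      (Pi.single (site n (2*q-1)) g.2 + Pi.single (site n (2*q)) g.1)
      (Pi.single (site n (2*q-1)) g.1) := by
  have h1 : 2*q-2 < n := by omega
  have h2 : 2*q-1 < n := by omega
  have s3 : site n (2*q-1) = ⟨2*q-2, h1⟩ := by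
    have := site_val (2*q-2) h1
    rwa [show (2*q-2)+1 = 2*q-1 by omega] at this
  have s4 : site n (2*q) = ⟨2*q-1, h2⟩ := by
    have := site_val (2*q-1) h2
    rwa [show (2*q-1)+1 = 2*q by omega] at this
  unfold VR
  rw [PZ_pow, PX_pow, PZ_pow, Pop_mul, Pop_mul]
  refine Pop_congr ?_ ?_ ?_
  · rw [dotF_zero_right, dotF_single, s3, s4]
    rw [Pi.add_apply, Pi.zero_apply, zero_add, Pi.single_apply, if_neg]
    · simp
    · simp only [Fin.mk.injEq]; omega
  · simp
  · simp

lemma TSOP_eq (hn2 : 2 ∣ n) (q : ℕ) (hq2 : 2 ≤ q) (hqn : 2*q + 2 ≤ n) (g h : G2) :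
    TSOP n 1 q g h = Pop (g.1*g.2 + (g.2*h.1 + g.1*h.2)) (cTf g q) (FTf g h q) := by
  have h0 : (0:ℕ) < n := by omega
  have h1 : (1:ℕ) < n := by omega
  have hj1 : 2*q-2 < n := by omega
  have hj2 : 2*q-1 < n := by omega
  have s3 : site n (2*q-1) = ⟨2*q-2, hj1⟩ := by
    have := site_val (2*q-2) hj1
    rwa [show (2*q-2)+1 = 2*q-1 by omega] at this
  have s4 : site n (2*q) = ⟨2*q-1, hj2⟩ := by
    have := site_val (2*q-1) hj2
    rwa [show (2*q-1)+1 = 2*q by omega] at this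
  have es1 : site n 1 = ⟨0, h0⟩ := site_val 0 h0
  have es2 : site n 2 = ⟨1, h1⟩ := site_val 1 h1
  unfold TSOP
  rw [VR_eq q (by omega) (by omega), Usym_eq hn2, VL_eq (by omega),
    Ustr_eq q (by omega), Pop_mul, Pop_mul, Pop_mul]
  refine Pop_congr ?_ ?_ ?_
  · -- sign
    rw [dotF_zero_left, dotF_zero_left, add_zero, add_zero, zero_add, zero_add]
    rw [dotF_add_left, dotF_single, dotF_single]
    have hv1 : ((Pi.single (site n (2*q-1)) g.1 + Fpat h : Fin n → ZMod 2)) (site n 1) = h.1 := by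
      rw [Pi.add_apply, s3, es1, Pi.single_apply, if_neg, zero_add]
      · show (if 2 ∣ (0:ℕ) then h.1 else h.2) = h.1
        simp
      · intro hc; have := congrArg Fin.val hc; simp only [Fin.val_mk] at this; omega
    have hv2 : ((Pi.single (site n (2*q-1)) g.1 + Fpat h : Fin n → ZMod 2)) (site n 2) = h.2 := by
      rw [Pi.add_apply, s3, es2, Pi.single_apply, if_neg, zero_add]
      · show (if 2 ∣ (1:ℕ) then h.1 else h.2) = h.2
        simp
      · intro hc; have := congrArg Fin.val hc; simp only [Fin.val_mk] at this; omega
    rw [hv1, hv2]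
    ring
  · -- Z part
    funext i
    simp only [Pi.add_apply, cTf, Pi.zero_apply]
    rw [s3, s4, es1, es2]
    simp only [Pi.single_apply]
    obtain ⟨iv, hlt⟩ := i
    simp only [Fin.mk.injEq]
    split_ifs <;> first | rfl | omega | (exfalso; omega) | ring
  · -- X part
    funext i
    simp only [Pi.add_apply, FTf, Gpat, Fpat, Pi.zero_apply]
    rw [s3, es2]
    simp only [Pi.single_apply]
    obtain ⟨iv, hlt⟩ := i
    simp only [Fin.mk.injEq]
    split_ifs <;> first | rfl | omega | (exfalso; omega) | ring

end Pau

namespace Pau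

variable {n : ℕ} [NeZero n]

/-- diagonal sign operator -/
def Dz (f : (Fin n → Fin 2) → ZMod 2) : Op n :=
  Matrix.of fun s t => if s = t then sgn (f s) else 0

lemma Dz_zero : (Dz (fun _ => 0) : Op n) = 1 := by
  ext s t
  show (if s = t then sgn 0 else 0) = _
  simp [one_apply]

lemma Dz_mul (f f' : (Fin n → Fin 2) → ZMod 2) :
    (Dz f : Op n) * Dz f' = Dz (fun s => f s + f' s) := by
  ext s t
  show (∑ u, (if s = u then sgn (f s) else 0) * (if u = t then sgn (f' u) else 0)) = _
  rw [Finset.sum_eq_single s]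
  · show (if s = s then _ else _) * _ = (if s = t then sgn (f s + f' s) else 0)
    rw [if_pos rfl]
    by_cases h : s = t
    · rw [if_pos h, if_pos h, sgn_add]
    · rw [if_neg h, if_neg h, mul_zero]
  · intro u _ hu
    rw [if_neg (fun hh => hu hh.symm), zero_mul]
  · simp

lemma Dz_mulVec (f : (Fin n → Fin 2) → ZMod 2) (v : QState n) :
    (Dz f : Op n).mulVec v = fun s => sgn (f s) * v s := by
  funext s
  rw [mulVec, dotProduct, Finset.sum_eq_single s]
  · show (if s = s then _ else _) * _ = _
    rw [if_pos rfl]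
  · intro u _ hu
    show (if s = u then _ else _) * _ = _
    rw [if_neg (fun hh => hu hh.symm), zero_mul]
  · simp

lemma prod_Dz (m : ℕ) (qf : ℕ → (Fin n → Fin 2) → ZMod 2) :
    ((List.range m).map (fun j => (Dz (qf j) : Op n))).prod
      = Dz (fun s => ∑ j ∈ Finset.range m, qf j s) := by
  induction m with
  | zero => simp [Dz_zero]
  | succ m ih =>
      rw [List.range_succ, List.map_append, List.prod_append, ih]
      simp only [List.map_cons, List.map_nil, List.prod_cons, List.prod_nil, mul_one]
      rw [Dz_mul]
      exact congrArg Dz (funext fun s => (Finset.sum_range_succ _ _).symm)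

lemma bit_and_iff : ∀ x y : Fin 2, (if x = 1 ∧ y = 1 then (-1:ℂ) else 1) = sgn (toZ x * toZ y) := by
  intro x y
  fin_cases x <;> fin_cases y <;> simp [toZ] <;> rfl

lemma CZm_eq (j k : ℕ) :
    CZm n j k = Dz (fun s => toZ (s (site n j)) * toZ (s (site n k))) := by
  ext s t
  show (if s = t then (if s (site n j) = 1 ∧ s (site n k) = 1 then (-1:ℂ) else 1) else 0) = _
  rw [bit_and_iff]
  rfl

def zs (s : Fin n → Fin 2) : Fin n → ZMod 2 := fun i => toZ (s i)

/-- the quadratic form of the cyclic cluster state -/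
def Qf (F : Fin n → ZMod 2) : ZMod 2 := ∑ i, F i * F (i+1)

lemma fin_add_one_val (hn : 2 ≤ n) (i : Fin n) : (i+1).val = (i.val+1) % n := by
  rw [Fin.add_def, Fin.val_one', Nat.mod_eq_of_lt (by omega : 1 < n)]

lemma site_succ (hn : 2 ≤ n) (i : Fin n) : site n (i.val + 2) = i + 1 := by
  apply Fin.ext
  show (i.val + 2 + (n-1)) % n = _
  rw [fin_add_one_val hn]
  have : i.val + 2 + (n-1) = (i.val + 1) + n := by omega
  rw [this, Nat.add_mod_right]

lemma site_self (i : Fin n) : site n (i.val + 1) = i := by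
  rw [site_val i.val i.isLt]

lemma cluster_eq (hn : 2 ≤ n) :
    cluster n = fun s => sgn (Qf (zs s)) * (((Real.sqrt 2)⁻¹ : ℝ) : ℂ) ^ n := by
  unfold cluster
  have hP : ((List.range n).map (fun j => CZm n (j+1) (j+2))).prod
      = Dz (fun s => ∑ j ∈ Finset.range n,
          toZ (s (site n (j+1))) * toZ (s (site n (j+2)))) := by
    have : (fun (j : ℕ) => CZm n (j+1) (j+2))
        = fun j => Dz (fun s => toZ (s (site n (j+1))) * toZ (s (site n (j+2)))) := by
      funext j; exact CZm_eq (j+1) (j+2)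
    rw [this, prod_Dz]
  rw [hP, Dz_mulVec]
  funext s
  show sgn _ * plusState n s = _
  unfold plusState
  congr 2
  have := Fin.sum_univ_eq_sum_range
    (fun j => toZ (s (site n (j+1))) * toZ (s (site n (j+2)))) n
  rw [← this, Qf]
  apply Finset.sum_congr rfl
  intro i _
  rw [site_self i]
  have : i.val + 1 + 1 = i.val + 2 := by omega
  rw [this, site_succ hn i]
  rfl

lemma sum_shift_reindex (f : Fin n → ZMod 2) : ∑ i, f i = ∑ i, f (i+1) :=
  (Fintype.sum_equiv (Equiv.addRight (1:Fin n)) (fun i => f (i+1)) f (fun _ => rfl)).symm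

lemma Qf_add (A F c : Fin n → ZMod 2)
    (hc : ∀ i, c (i+1) = F i + F (i+1+1)) :
    Qf (fun i => A i + F i) = Qf A + Qf F + ∑ i, A i * c i := by
  have expand : Qf (fun i => A i + F i)
      = Qf A + Qf F + ((∑ i, A i * F (i+1)) + (∑ i, F i * A (i+1))) := by
    unfold Qf
    rw [← Finset.sum_add_distrib, ← Finset.sum_add_distrib, ← Finset.sum_add_distrib]
    apply Finset.sum_congr rfl
    intro i _
    ring
  rw [expand]
  congr 1
  have h1 : (∑ i, A i * F (i+1)) = ∑ i, A (i+1) * F (i+1+1) :=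
    sum_shift_reindex (fun i => A i * F (i+1))
  have h2 : (∑ i, F i * A (i+1)) = ∑ i, A (i+1) * F i := by
    apply Finset.sum_congr rfl; intro i _; ring
  rw [h1, h2, ← Finset.sum_add_distrib]
  have h3 : (∑ i, (A (i+1) * F (i+1+1) + A (i+1) * F i)) = ∑ i, A (i+1) * c (i+1) := by
    apply Finset.sum_congr rfl
    intro i _
    rw [hc i]
    ring
  rw [h3]
  exact (sum_shift_reindex (fun i => A i * c i)).symm

lemma Pop_mulVec_cluster (hn : 2 ≤ n) (ε : ZMod 2) (c F : Fin n → ZMod 2)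
    (hc : ∀ i, c (i+1) = F i + F (i+1+1)) :
    (Pop ε c F : Op n).mulVec (cluster n) = fun s => sgn (ε + Qf F) * cluster n s := by
  rw [cluster_eq hn, Pop_mulVec]
  funext s
  have hzs : zs (shift s F) = fun i => zs s i + F i := rfl
  rw [hzs, Qf_add (zs s) F c hc]
  have hdz : (∑ i, zs s i * c i) = dotZ c s := by
    unfold dotZ zs
    apply Finset.sum_congr rfl
    intro i _
    ring
  rw [hdz, sgn_add, sgn_add, sgn_add]
  ring_nf
  rw [show sgn (dotZ c s) ^ 2 = 1 from by rw [sq, sgn_mul_self]]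
  ring

end Pau

namespace Pau

variable {n : ℕ} [NeZero n]

lemma psd_smul {M : Op n} (hM : M.PosSemidef) {r : ℝ} (hr : 0 ≤ r) :
    (((r:ℝ):ℂ) • M).PosSemidef := by
  constructor
  · show (((r:ℝ):ℂ) • M)ᴴ = _
    rw [conjTranspose_smul, hM.1]
    congr 1
    exact Complex.conj_ofReal r
  · intro x
    exact (hM.smul (a := ((r:ℝ):ℂ)) (Complex.zero_le_real.mpr hr)).2 x

lemma triple_psd {A B C : Op n} (hAh : Aᴴ = A) (hBh : Bᴴ = B) (hCh : Cᴴ = C)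
    (hA2 : A*A = 1) (hB2 : B*B = 1) (hC2 : C*C = 1)
    (hBA : B*A = A*B) (hCA : C*A = A*C) (hCB : C*B = B*C) :
    ((1+A)*((1+B)*(1+C))).PosSemidef := by
  have l1 : ∀ x : Op n, A*(A*x) = x := fun x => by rw [← mul_assoc, hA2, one_mul]
  have l2 : ∀ x : Op n, B*(B*x) = x := fun x => by rw [← mul_assoc, hB2, one_mul]
  have l3 : ∀ x : Op n, C*(C*x) = x := fun x => by rw [← mul_assoc, hC2, one_mul]
  have m1 : ∀ x : Op n, B*(A*x) = A*(B*x) := fun x => by rw [← mul_assoc, hBA, mul_assoc]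
  have m2 : ∀ x : Op n, C*(A*x) = A*(C*x) := fun x => by rw [← mul_assoc, hCA, mul_assoc]
  have m3 : ∀ x : Op n, C*(B*x) = B*(C*x) := fun x => by rw [← mul_assoc, hCB, mul_assoc]
  set M : Op n := (1+A)*((1+B)*(1+C)) with hMdef
  have hprod : Mᴴ * M = M+M+M+M+M+M+M+M := by
    rw [hMdef]
    simp only [conjTranspose_mul, conjTranspose_add, conjTranspose_one, hAh, hBh, hCh]
    simp only [mul_add, add_mul, one_mul, mul_one, mul_assoc, hA2, hB2, hC2,
      l1, l2, l3, m1, m2, m3, hBA, hCA, hCB]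
    abel
  have hM8 : M = (((8:ℝ)⁻¹:ℝ):ℂ) • (Mᴴ * M) := by
    rw [hprod]
    module
  rw [hM8]
  exact psd_smul (Matrix.posSemidef_conjTranspose_mul_self M) (by norm_num)

end Pau

namespace Pau

variable {n : ℕ} [NeZero n]

lemma zaddself : ∀ x : ZMod 2, x + x = 0 := by decide

lemma addself (F : Fin n → ZMod 2) : F + F = 0 := by
  funext i; exact zaddself (F i)

lemma Fpat_add (g h : G2) : Fpat (n:=n) (g+h) = Fpat g + Fpat h := by
  funext i
  show (if 2 ∣ i.val then (g+h).1 else (g+h).2) = (if 2 ∣ i.val then g.1 else g.2) + (if 2 ∣ i.val then h.1 else h.2)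
  by_cases h2 : 2 ∣ i.val <;> simp [h2] <;> rfl

lemma Pop_invol (ε : ZMod 2) (c F : Fin n → ZMod 2) (hd : dotF c F = 0) :
    (Pop ε c F : Op n) * Pop ε c F = 1 := by
  rw [Pop_mul]
  have h1 : ε + ε + dotF c F = 0 := by rw [hd, zaddself, zero_add]
  rw [h1, addself, addself, Pop_one]

lemma Pop_herm (ε : ZMod 2) (c F : Fin n → ZMod 2) (hd : dotF c F = 0) :
    (Pop ε c F : Op n)ᴴ = Pop ε c F := by
  rw [Pop_conjTranspose, hd, add_zero]

lemma Pop_comm {ε ε' : ZMod 2} {c c' F F' : Fin n → ZMod 2} (hd : dotF c' F = dotF c F') :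
    (Pop ε c F : Op n) * Pop ε' c' F' = Pop ε' c' F' * Pop ε c F := by
  rw [Pop_mul, Pop_mul]
  refine Pop_congr ?_ (add_comm _ _) (add_comm _ _)
  rw [hd]; ring

lemma cTf_singles (g : G2) (q : ℕ) (hq2 : 2 ≤ q) (hqn : 2*q+2 ≤ n) :
    cTf (n:=n) g q
      = Pi.single (⟨0, by omega⟩ : Fin n) g.2 + Pi.single (⟨1, by omega⟩ : Fin n) g.1
        + Pi.single (⟨2*q-2, by omega⟩ : Fin n) g.2 + Pi.single (⟨2*q-1, by omega⟩ : Fin n) g.1 := by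
  funext i
  obtain ⟨v, hv⟩ := i
  simp only [cTf, Pi.add_apply, Pi.single_apply, Fin.mk.injEq]
  split_ifs <;> first | (exfalso; omega) | simp

lemma dot_cTf (g : G2) (q : ℕ) (hq2 : 2 ≤ q) (hqn : 2*q+2 ≤ n) (X : Fin n → ZMod 2) :
    dotF (cTf g q) X
      = g.2 * X ⟨0, by omega⟩ + g.1 * X ⟨1, by omega⟩
        + g.2 * X ⟨2*q-2, by omega⟩ + g.1 * X ⟨2*q-1, by omega⟩ := by
  rw [cTf_singles g q hq2 hqn, dotF_add_left, dotF_add_left, dotF_add_left,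
    dotF_single, dotF_single, dotF_single, dotF_single]

lemma dot_cTf_Fpat (g k : G2) (q : ℕ) (hq2 : 2 ≤ q) (hqn : 2*q+2 ≤ n) :
    dotF (cTf g q) (Fpat (n:=n) k) = 0 := by
  rw [dot_cTf g q hq2 hqn]
  have e0 : Fpat (n:=n) k ⟨0, by omega⟩ = k.1 := by
    show (if 2 ∣ (0:ℕ) then k.1 else k.2) = k.1
    rw [if_pos (by omega)]
  have e1 : Fpat (n:=n) k ⟨1, by omega⟩ = k.2 := by
    show (if 2 ∣ (1:ℕ) then k.1 else k.2) = k.2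
    rw [if_neg (by omega)]
  have e2 : Fpat (n:=n) k ⟨2*q-2, by omega⟩ = k.1 := by
    show (if 2 ∣ (2*q-2:ℕ) then k.1 else k.2) = k.1
    rw [if_pos (by omega)]
  have e3 : Fpat (n:=n) k ⟨2*q-1, by omega⟩ = k.2 := by
    show (if 2 ∣ (2*q-1:ℕ) then k.1 else k.2) = k.2
    rw [if_neg (by omega)]
  rw [e0, e1, e2, e3]
  have : ∀ x y : ZMod 2, x + y + x + y = 0 := by decide
  exact this _ _

lemma dot_cTf_FTf (g h : G2) (q : ℕ) (hq2 : 2 ≤ q) (hqn : 2*q+2 ≤ n) :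
    dotF (cTf g q) (FTf (n:=n) g h q) = 0 := by
  rw [dot_cTf g q hq2 hqn]
  have e0 : FTf (n:=n) g h q ⟨0, by omega⟩ = h.1 := by
    show (if 2 ∣ (0:ℕ) then h.1 else h.2)
      + (if 1 ≤ (0:ℕ) ∧ (0:ℕ) ≤ 2*q-2 then (if 2 ∣ (0:ℕ) then g.1 else g.2) else 0) = h.1
    rw [if_pos (by omega), if_neg (by omega), add_zero]
  have e1 : FTf (n:=n) g h q ⟨1, by omega⟩ = h.2 + g.2 := by
    show (if 2 ∣ (1:ℕ) then h.1 else h.2)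
      + (if 1 ≤ (1:ℕ) ∧ (1:ℕ) ≤ 2*q-2 then (if 2 ∣ (1:ℕ) then g.1 else g.2) else 0) = h.2 + g.2
    rw [if_neg (by omega), if_pos (by omega), if_neg (by omega)]
  have e2 : FTf (n:=n) g h q ⟨2*q-2, by omega⟩ = h.1 + g.1 := by
    show (if 2 ∣ (2*q-2:ℕ) then h.1 else h.2)
      + (if 1 ≤ (2*q-2:ℕ) ∧ (2*q-2:ℕ) ≤ 2*q-2 then (if 2 ∣ (2*q-2:ℕ) then g.1 else g.2) else 0)
        = h.1 + g.1
    rw [if_pos (by omega), if_pos (by omega), if_pos (by omega)]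
  have e3 : FTf (n:=n) g h q ⟨2*q-1, by omega⟩ = h.2 := by
    show (if 2 ∣ (2*q-1:ℕ) then h.1 else h.2)
      + (if 1 ≤ (2*q-1:ℕ) ∧ (2*q-1:ℕ) ≤ 2*q-2 then (if 2 ∣ (2*q-1:ℕ) then g.1 else g.2) else 0)
        = h.2
    rw [if_neg (by omega), if_neg (by omega), add_zero]
  rw [e0, e1, e2, e3]
  have : ∀ a b al be : ZMod 2, b*al + a*(be+b) + b*(al+a) + a*be = 0 := by decide
  exact this g.1 g.2 h.1 h.2

lemma val_add_one (hn2 : 2 ≤ n) (i : Fin n) :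
    (i+1).val = if i.val + 1 = n then 0 else i.val + 1 := by
  rw [fin_add_one_val hn2]
  split_ifs with hcase
  · rw [hcase, Nat.mod_self]
  · exact Nat.mod_eq_of_lt (by have := i.isLt; omega)

lemma val_add_two (hn2 : 2 ≤ n) (i : Fin n) :
    (i+1+1).val = if i.val + 2 = n then 0 else if i.val + 1 = n then 1 else i.val + 2 := by
  rw [fin_add_one_val hn2, val_add_one hn2]
  have hv := i.isLt
  split_ifs with h1 h2 h2
  · omega
  · rw [Nat.mod_eq_of_lt (by omega)]
  · rw [h2, Nat.mod_self]
  · rw [Nat.mod_eq_of_lt (by omega)]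

lemma Fpat_two_step (hne : 2 ∣ n) (hn2 : 2 ≤ n) (g : G2) (i : Fin n) :
    Fpat (n:=n) g (i+1+1) = Fpat g i := by
  have hv := i.isLt
  have hp : (2 ∣ (i+1+1).val) ↔ 2 ∣ i.val := by
    rw [val_add_two hn2]
    split_ifs <;> omega
  show (if 2 ∣ (i+1+1).val then g.1 else g.2) = (if 2 ∣ i.val then g.1 else g.2)
  rw [if_congr hp rfl rfl]

lemma Fpat_mul_next (hne : 2 ∣ n) (hn2 : 2 ≤ n) (g : G2) (i : Fin n) :
    Fpat (n:=n) g i * Fpat g (i+1) = g.1 * g.2 := by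
  have hv := i.isLt
  have hp : (2 ∣ (i+1).val) ↔ ¬ 2 ∣ i.val := by
    rw [val_add_one hn2]
    split_ifs <;> omega
  show (if 2 ∣ i.val then g.1 else g.2) * (if 2 ∣ (i+1).val then g.1 else g.2) = g.1 * g.2
  by_cases h2 : 2 ∣ i.val
  · rw [if_pos h2, if_neg (fun hc => (hp.mp hc) h2)]
  · rw [if_neg h2, if_pos (hp.mpr h2), mul_comm]

lemma natCast_even_zmod2 (hne : 2 ∣ n) : ((n:ℕ) : ZMod 2) = 0 :=
  (ZMod.natCast_eq_zero_iff n 2).mpr hne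

lemma Qf_Fpat (hne : 2 ∣ n) (hn2 : 2 ≤ n) (g : G2) : Qf (Fpat (n:=n) g) = 0 := by
  unfold Qf
  rw [Finset.sum_congr rfl (fun i _ => Fpat_mul_next hne hn2 g i)]
  rw [Finset.sum_const, Finset.card_univ, Fintype.card_fin, nsmul_eq_mul,
    natCast_even_zmod2 hne, zero_mul]

lemma Usym_cluster (hn2 : 2 ≤ n) (hne : 2 ∣ n) (g : G2) :
    (Usym n g).mulVec (cluster n) = cluster n := by
  rw [Usym_eq hne, Pop_mulVec_cluster hn2 0 0 (Fpat g)
    (fun i => by rw [Fpat_two_step hne hn2 g i]; exact (zaddself _).symm)]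
  funext s
  rw [zero_add, Qf_Fpat hne hn2, sgn_zero, one_mul]

set_option maxHeartbeats 3000000 in
lemma hcT_cluster (hne : 2 ∣ n) (q : ℕ) (hq2 : 2 ≤ q) (hqn : 2*q+2 ≤ n) (g h : G2) (i : Fin n) :
    cTf g q (i+1) = FTf (n:=n) g h q i + FTf g h q (i+1+1) := by
  have hn2 : 2 ≤ n := by omega
  have hv := i.isLt
  unfold FTf
  rw [Fpat_two_step hne hn2 h i]
  have hrearr : ∀ p x y : ZMod 2, (p + x) + (p + y) = x + y := by decide
  rw [hrearr]
  unfold cTf Gpat Fpat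
  rw [val_add_one hn2 i, val_add_two hn2 i]
  obtain ⟨a, b⟩ := g
  rcases zcases a with rfl|rfl <;> rcases zcases b with rfl|rfl <;>
    (split_ifs <;> first | rfl | exact (‹False›).elim | omega | decide)

lemma Qf_FTf (hne : 2 ∣ n) (q : ℕ) (hq2 : 2 ≤ q) (hqn : 2*q+2 ≤ n) (g h : G2) :
    Qf (FTf (n:=n) g h q) = g.1 * g.2 := by
  have hn2 : 2 ≤ n := by omega
  have hexp : ∀ i : Fin n, FTf g h q i * FTf g h q (i+1)
      = Fpat h i * Fpat h (i+1)
        + (Fpat h i * Gpat g q (i+1) + Gpat g q i * Fpat h (i+1))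
        + Gpat g q i * Gpat g q (i+1) := by
    intro i; unfold FTf; ring
  unfold Qf
  rw [Finset.sum_congr rfl (fun i _ => hexp i), Finset.sum_add_distrib, Finset.sum_add_distrib,
    Finset.sum_add_distrib]
  have p1 : (∑ i : Fin n, Fpat (n:=n) h i * Fpat h (i+1)) = 0 := Qf_Fpat hne hn2 h
  have c1 : (∑ i : Fin n, Fpat (n:=n) h i * Gpat g q (i+1))
      = ∑ i : Fin n, Gpat (n:=n) g q i * Fpat h (i+1) := by
    calc (∑ i : Fin n, Fpat (n:=n) h i * Gpat g q (i+1))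
        = ∑ i : Fin n, Fpat (n:=n) h (i+1+1) * Gpat g q (i+1) :=
          Finset.sum_congr rfl (fun i _ => by rw [Fpat_two_step hne hn2 h i])
      _ = ∑ i : Fin n, Fpat (n:=n) h (i+1) * Gpat g q i :=
          (sum_shift_reindex (fun i => Fpat (n:=n) h (i+1) * Gpat g q i)).symm
      _ = ∑ i : Fin n, Gpat (n:=n) g q i * Fpat h (i+1) :=
          Finset.sum_congr rfl (fun i _ => by ring)
  have p2 : (∑ i : Fin n, Fpat (n:=n) h i * Gpat g q (i+1))
      + (∑ i : Fin n, Gpat (n:=n) g q i * Fpat h (i+1)) = 0 := by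
    rw [c1]; exact zaddself _
  have p3 : (∑ i : Fin n, Gpat (n:=n) g q i * Gpat g q (i+1)) = g.1 * g.2 := by
    have hterm : ∀ i : Fin n, Gpat (n:=n) g q i * Gpat g q (i+1)
        = if 1 ≤ i.val ∧ i.val ≤ 2*q-3 then g.1*g.2 else 0 := by
      intro i
      have hv := i.isLt
      unfold Gpat Fpat
      rw [val_add_one hn2 i]
      obtain ⟨a, b⟩ := g
      rcases zcases a with rfl|rfl <;> rcases zcases b with rfl|rfl <;>
        (split_ifs <;> first | rfl | omega | decide)
    rw [Finset.sum_congr rfl (fun i _ => hterm i)]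
    rw [Fin.sum_univ_eq_sum_range (fun v => if 1 ≤ v ∧ v ≤ 2*q-3 then g.1*g.2 else 0) n]
    rw [Finset.sum_ite, Finset.sum_const, Finset.sum_const_zero, add_zero]
    have hfilter : (Finset.range n).filter (fun v => 1 ≤ v ∧ v ≤ 2*q-3) = Finset.Icc 1 (2*q-3) := by
      ext v
      simp only [Finset.mem_filter, Finset.mem_range, Finset.mem_Icc]
      omega
    rw [hfilter, Nat.card_Icc]
    have hodd : (2*q-3+1-1 : ℕ) = 2*(q-2)+1 := by omega
    rw [hodd, nsmul_eq_mul]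
    have hcast : ((2*(q-2)+1 : ℕ) : ZMod 2) = 1 := by
      push_cast
      have h2 : (2 : ZMod 2) = 0 := rfl
      rw [h2]; ring
    rw [hcast, one_mul]
  rw [p1, p2, p3, zero_add, zero_add]

lemma TSOP_cluster (hne : 2 ∣ n) (q : ℕ) (hq2 : 2 ≤ q) (hqn : 2*q+2 ≤ n) (g h : G2)
    (key : g.2*h.1 + g.1*h.2 = 1) :
    (TSOP n 1 q g h).mulVec (cluster n) = -(cluster n) := by
  have hn2 : 2 ≤ n := by omega
  rw [TSOP_eq hne q hq2 hqn, Pop_mulVec_cluster hn2 _ _ _ (hcT_cluster hne q hq2 hqn g h)]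
  funext s
  rw [Qf_FTf hne q hq2 hqn g h, key]
  have : ∀ x : ZMod 2, x + 1 + x = 1 := by decide
  rw [this, sgn_one, Pi.neg_apply, neg_one_mul]

end Pau

open Pau in
/-- The triangle-game winning operator `O_{g,h}` is Hermitian, positive semidefinite,
satisfies `O_{g,h} ≤ 1`, and fixes the cyclic cluster state. -/
theorem Owin_is_valid_effect (n : ℕ) [NeZero n] (hn4 : 4 ≤ n) (hn : 6 ∣ n)
    (g h : G2) (hg : g ≠ 0) (hh : h ≠ 0) (hgh : g ≠ h) :
    (Owin n g h).IsHermitian ∧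
    (Owin n g h).PosSemidef ∧
    ((1 : Op n) - Owin n g h).PosSemidef ∧
    (Owin n g h).mulVec (cluster n) = cluster n := by
  have hn6 : 6 ≤ n := by omega
  have hn2 : 2 ≤ n := by omega
  have hne : 2 ∣ n := by omega
  have hq2 : 2 ≤ n/6+1 := by omega
  have hqn : 2*(n/6+1)+2 ≤ n := by omega
  set q : ℕ := n/6 + 1 with hq
  set A : Op n := Usym n g with hAdef
  set B : Op n := Usym n h with hBdef
  set T : Op n := TSOP n 1 q g h with hTdef
  have hA : A = Pop 0 0 (Fpat g) := Usym_eq hne g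
  have hB : B = Pop 0 0 (Fpat h) := Usym_eq hne h
  have hT : T = Pop (g.1*g.2 + (g.2*h.1 + g.1*h.2)) (cTf g q) (FTf g h q) :=
    TSOP_eq hne q hq2 hqn g h
  have d1 : dotF (cTf g q) (Fpat (n:=n) g) = 0 := dot_cTf_Fpat g g q hq2 hqn
  have d2 : dotF (cTf g q) (Fpat (n:=n) h) = 0 := dot_cTf_Fpat g h q hq2 hqn
  have d3 : dotF (cTf g q) (FTf (n:=n) g h q) = 0 := dot_cTf_FTf g h q hq2 hqn
  have hAh : Aᴴ = A := by rw [hA]; exact Pop_herm _ _ _ (dotF_zero_left _)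
  have hBh : Bᴴ = B := by rw [hB]; exact Pop_herm _ _ _ (dotF_zero_left _)
  have hTh : Tᴴ = T := by rw [hT]; exact Pop_herm _ _ _ d3
  have hA2 : A*A = 1 := by rw [hA]; exact Pop_invol _ _ _ (dotF_zero_left _)
  have hB2 : B*B = 1 := by rw [hB]; exact Pop_invol _ _ _ (dotF_zero_left _)
  have hT2 : T*T = 1 := by rw [hT]; exact Pop_invol _ _ _ d3
  have hBA : B*A = A*B := by
    rw [hA, hB]; exact Pop_comm (by rw [dotF_zero_left, dotF_zero_left])
  have hTA : T*A = A*T := by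
    rw [hA, hT]; exact Pop_comm (by rw [dotF_zero_left, d1])
  have hTB : T*B = B*T := by
    rw [hB, hT]; exact Pop_comm (by rw [dotF_zero_left, d2])
  have key : g.2*h.1 + g.1*h.2 = 1 := by
    have hk : ∀ g h : G2, g ≠ 0 → h ≠ 0 → g ≠ h → g.2*h.1 + g.1*h.2 = 1 := by decide
    exact hk g h hg hh hgh
  have hAv : A *ᵥ cluster n = cluster n := Usym_cluster hn2 hne g
  have hBv : B *ᵥ cluster n = cluster n := Usym_cluster hn2 hne h
  have hGHv : Usym n (g+h) *ᵥ cluster n = cluster n := Usym_cluster hn2 hne (g+h)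
  have hTv : T *ᵥ cluster n = -(cluster n) := TSOP_cluster hne q hq2 hqn g h key
  have hATv : (A*T) *ᵥ cluster n = -(cluster n) := by
    rw [← Matrix.mulVec_mulVec, hTv, Matrix.mulVec_neg, hAv]
  have hABop : A*B = Usym n (g+h) := by
    rw [hA, hB, Pop_mul, Usym_eq hne (g+h), Fpat_add]
    exact Pop_congr (by simp [dotF_zero_left]) (by simp) rfl
  have hOform : Owin n g h = (32:ℂ)⁻¹ •
      ((12:ℂ) • (1:Op n) + (12:ℂ) • A + B + A*B - (3:ℂ) • T - (3:ℂ) • (A*T)) := by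
    unfold Owin
    rw [← hq, ← hAdef, ← hBdef, ← hTdef, ← hABop]
    simp only [← Nat.cast_smul_eq_nsmul ℂ, Nat.cast_ofNat]
  have e1 : (1+A)*((1+B)*(1+T)) = 1+A+B+T+A*B+A*T+B*T+A*(B*T) := by noncomm_ring
  have e2 : (1+A)*((1+B)*(1+(-T))) = 1+A+B-T+A*B-A*T-B*T-A*(B*T) := by noncomm_ring
  have e3 : (1+A)*((1+(-B))*(1+T)) = 1+A-B+T-A*B+A*T-B*T-A*(B*T) := by noncomm_ring
  have e4 : (1+A)*((1+(-B))*(1+(-T))) = 1+A-B-T-A*B-A*T+B*T+A*(B*T) := by noncomm_ring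
  have e5 : (1+(-A))*((1+B)*(1+T)) = 1-A+B+T-A*B-A*T+B*T-A*(B*T) := by noncomm_ring
  have e6 : (1+(-A))*((1+B)*(1+(-T))) = 1-A+B-T-A*B+A*T-B*T+A*(B*T) := by noncomm_ring
  have e7 : (1+(-A))*((1+(-B))*(1+T)) = 1-A-B+T+A*B-A*T-B*T+A*(B*T) := by noncomm_ring
  have e8 : (1+(-A))*((1+(-B))*(1+(-T))) = 1-A-B-T+A*B+A*T+B*T-A*(B*T) := by noncomm_ring
  have hOdec : Owin n g h = (10/128:ℂ) • ((1+A)*((1+B)*(1+T)))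
      + ((16/128:ℂ) • ((1+A)*((1+B)*(1+(-T))))
      + ((8/128:ℂ) • ((1+A)*((1+(-B))*(1+T)))
      + (14/128:ℂ) • ((1+A)*((1+(-B))*(1+(-T)))))) := by
    rw [hOform, e1, e2, e3, e4]
    module
  have hOdec1 : (1:Op n) - Owin n g h = (6/128:ℂ) • ((1+A)*((1+B)*(1+T)))
      + ((8/128:ℂ) • ((1+A)*((1+(-B))*(1+T)))
      + ((2/128:ℂ) • ((1+A)*((1+(-B))*(1+(-T))))
      + ((16/128:ℂ) • ((1+(-A))*((1+B)*(1+T)))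
      + ((16/128:ℂ) • ((1+(-A))*((1+B)*(1+(-T))))
      + ((16/128:ℂ) • ((1+(-A))*((1+(-B))*(1+T)))
      + (16/128:ℂ) • ((1+(-A))*((1+(-B))*(1+(-T))))))))) := by
    rw [hOform, e1, e3, e4, e5, e6, e7, e8]
    module
  have hnegTh : (-T)ᴴ = -T := by rw [conjTranspose_neg, hTh]
  have hnegBh : (-B)ᴴ = -B := by rw [conjTranspose_neg, hBh]
  have hnegAh : (-A)ᴴ = -A := by rw [conjTranspose_neg, hAh]
  have P1 : ((1+A)*((1+B)*(1+T))).PosSemidef :=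
    triple_psd hAh hBh hTh hA2 hB2 hT2 hBA hTA hTB
  have P2 : ((1+A)*((1+B)*(1+(-T)))).PosSemidef :=
    triple_psd hAh hBh hnegTh hA2 hB2 (by rw [neg_mul_neg, hT2])
      hBA (by rw [neg_mul, hTA, mul_neg]) (by rw [neg_mul, hTB, mul_neg])
  have P3 : ((1+A)*((1+(-B))*(1+T))).PosSemidef :=
    triple_psd hAh hnegBh hTh hA2 (by rw [neg_mul_neg, hB2]) hT2
      (by rw [neg_mul, hBA, mul_neg]) hTA (by rw [mul_neg, hTB, neg_mul])
  have P4 : ((1+A)*((1+(-B))*(1+(-T)))).PosSemidef :=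
    triple_psd hAh hnegBh hnegTh hA2 (by rw [neg_mul_neg, hB2]) (by rw [neg_mul_neg, hT2])
      (by rw [neg_mul, hBA, mul_neg]) (by rw [neg_mul, hTA, mul_neg])
      (by rw [neg_mul_neg, hTB, neg_mul_neg])
  have P5 : ((1+(-A))*((1+B)*(1+T))).PosSemidef :=
    triple_psd hnegAh hBh hTh (by rw [neg_mul_neg, hA2]) hB2 hT2
      (by rw [mul_neg, hBA, neg_mul]) (by rw [mul_neg, hTA, neg_mul]) hTB
  have P6 : ((1+(-A))*((1+B)*(1+(-T)))).PosSemidef :=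
    triple_psd hnegAh hBh hnegTh (by rw [neg_mul_neg, hA2]) hB2 (by rw [neg_mul_neg, hT2])
      (by rw [mul_neg, hBA, neg_mul]) (by rw [neg_mul_neg, hTA, neg_mul_neg])
      (by rw [neg_mul, hTB, mul_neg])
  have P7 : ((1+(-A))*((1+(-B))*(1+T))).PosSemidef :=
    triple_psd hnegAh hnegBh hTh (by rw [neg_mul_neg, hA2]) (by rw [neg_mul_neg, hB2]) hT2
      (by rw [neg_mul_neg, hBA, neg_mul_neg]) (by rw [mul_neg, hTA, neg_mul])
      (by rw [mul_neg, hTB, neg_mul])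
  have P8 : ((1+(-A))*((1+(-B))*(1+(-T)))).PosSemidef :=
    triple_psd hnegAh hnegBh hnegTh (by rw [neg_mul_neg, hA2]) (by rw [neg_mul_neg, hB2])
      (by rw [neg_mul_neg, hT2]) (by rw [neg_mul_neg, hBA, neg_mul_neg])
      (by rw [neg_mul_neg, hTA, neg_mul_neg]) (by rw [neg_mul_neg, hTB, neg_mul_neg])
  have c10 : (10/128:ℂ) = ((10/128:ℝ):ℂ) := by norm_num
  have c16 : (16/128:ℂ) = ((16/128:ℝ):ℂ) := by norm_num
  have c8 : (8/128:ℂ) = ((8/128:ℝ):ℂ) := by norm_num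
  have c14 : (14/128:ℂ) = ((14/128:ℝ):ℂ) := by norm_num
  have c6 : (6/128:ℂ) = ((6/128:ℝ):ℂ) := by norm_num
  have c2 : (2/128:ℂ) = ((2/128:ℝ):ℂ) := by norm_num
  have hOpsd : (Owin n g h).PosSemidef := by
    rw [hOdec, c10, c16, c8, c14]
    exact (psd_smul P1 (by norm_num)).add ((psd_smul P2 (by norm_num)).add
      ((psd_smul P3 (by norm_num)).add (psd_smul P4 (by norm_num))))
  have h1Opsd : ((1:Op n) - Owin n g h).PosSemidef := by
    rw [hOdec1, c6, c8, c2, c16]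
    exact (psd_smul P1 (by norm_num)).add ((psd_smul P3 (by norm_num)).add
      ((psd_smul P4 (by norm_num)).add ((psd_smul P5 (by norm_num)).add
      ((psd_smul P6 (by norm_num)).add ((psd_smul P7 (by norm_num)).add
      (psd_smul P8 (by norm_num)))))))
  have hvec : (Owin n g h).mulVec (cluster n) = cluster n := by
    rw [hOform, Matrix.smul_mulVec, Matrix.sub_mulVec, Matrix.sub_mulVec,
      Matrix.add_mulVec, Matrix.add_mulVec, Matrix.add_mulVec,
      Matrix.smul_mulVec, Matrix.smul_mulVec, Matrix.smul_mulVec,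
      Matrix.smul_mulVec, Matrix.one_mulVec, hAv, hBv, hABop, hGHv, hTv, hATv]
    module
  exact ⟨hOpsd.1, hOpsd, h1Opsd, hvec⟩
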